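/- Let ω, ω_X, ω_C, γ, g be real numbers with γ ≠ 0, g > 0, ω > max(ω_X, ω_C), and γ² < ϖ_X·ϖ_C < (3/2)·γ² (band 1.2). Then there exist functions φ_X, φ_C : ℝ → ℝ, with φ_X continuously differentiable and φ_C twice continuously differentiable, satisfying the stationary polariton envelope equations at every x ∈ ℝ, such that φ_X and φ_C are odd, monotone, and bounded, and φ_X(x)² tends to (ϖ_X − γ²/ϖ_C)/g as x → +∞ and as x → −∞. -/

import Mathlib

open Filter Real Set

set_option maxHeartbeats 2000000 in
theorem aux_dark_soliton (A B γ g : ℝ) (hγ : γ ≠ 0) (hg : 0 < g) (hA : 0 < A) (hB : 0 < B)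
    (h1 : γ ^ 2 < A * B) (h2 : A * B < (3/2) * γ ^ 2) :
    ∃ φX φC : ℝ → ℝ,
      ContDiff ℝ 1 φX ∧ ContDiff ℝ 2 φC ∧
      (∀ x : ℝ, (g * φX x ^ 2 - A) * φX x + γ * φC x = 0) ∧
      (∀ x : ℝ, -(1/2) * deriv (deriv φC) x - B * φC x + γ * φX x = 0) ∧
      (∀ x : ℝ, φX (-x) = -φX x) ∧ (∀ x : ℝ, φC (-x) = -φC x) ∧
      (Monotone φX ∨ Antitone φX) ∧ (Monotone φC ∨ Antitone φC) ∧
      (∃ M : ℝ, ∀ x : ℝ, |φX x| ≤ M) ∧ (∃ M : ℝ, ∀ x : ℝ, |φC x| ≤ M) ∧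
      Tendsto (fun x => φX x ^ 2) atTop (nhds ((A - γ ^ 2 / B) / g)) ∧
      Tendsto (fun x => φX x ^ 2) atBot (nhds ((A - γ ^ 2 / B) / g)) := by
  have hγ2 : 0 < γ ^ 2 := by positivity
  -- the two key amplitudes
  set sE : ℝ := (A * B - γ ^ 2) / (B * g) with hsE_def
  set sZ : ℝ := γ ^ 2 / (2 * B * g) with hsZ_def
  have hsE : 0 < sE := div_pos (by nlinarith) (by positivity)
  have hsZ : 0 < sZ := by positivity
  have hEZ : sE < sZ := by
    rw [hsE_def, hsZ_def, div_lt_div_iff₀ (by positivity) (by positivity)]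
    nlinarith [mul_pos hB hg]
  have hA3 : 3 * g * sE < A := by
    rw [hsE_def]
    rw [show 3 * g * ((A * B - γ ^ 2) / (B * g)) = (3 * (A * B - γ ^ 2)) / B by
      field_simp]
    rw [div_lt_iff₀ hB]
    nlinarith
  have hAid : g * (2 * sZ + sE) = A := by
    rw [hsE_def, hsZ_def]; field_simp; ring
  have hBid : B * g * sE = A * B - γ ^ 2 := by
    rw [hsE_def]; field_simp
  set a : ℝ := Real.sqrt sE with ha_def
  have ha : 0 < a := Real.sqrt_pos.2 hsE
  have ha2 : a ^ 2 = sE := Real.sq_sqrt hsE.le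
  set c : ℝ := g * Real.sqrt (2 * B) with hc_def
  have hc : 0 < c := mul_pos hg (Real.sqrt_pos.2 (by positivity))
  have hc2 : c ^ 2 = 2 * B * g ^ 2 := by
    rw [hc_def, mul_pow, Real.sq_sqrt (by positivity : (0:ℝ) ≤ 2 * B)]; ring
  -- membership facts
  have hmem : ∀ v ∈ Ioo (-a) a, v ^ 2 < sE := by
    intro v hv
    have := sq_lt_sq' hv.1 hv.2
    rwa [ha2] at this
  have hfacts : ∀ v : ℝ, v ^ 2 < sE →
      0 < sE - v ^ 2 ∧ 0 < sZ - v ^ 2 ∧ 0 < A - 3 * g * v ^ 2 := by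
    intro v hv
    refine ⟨by linarith, by linarith, ?_⟩
    nlinarith [sq_nonneg v]
  -- the ODE right-hand side and its reciprocal (the integrand)
  set h : ℝ → ℝ := fun v => c * (sE - v ^ 2) * Real.sqrt (sZ - v ^ 2) / (A - 3 * g * v ^ 2)
    with hh_def
  set f : ℝ → ℝ := fun v => (h v)⁻¹ with hf_def
  have hhpos : ∀ v : ℝ, v ^ 2 < sE → 0 < h v := by
    intro v hv
    obtain ⟨e1, e2, e3⟩ := hfacts v hv
    exact div_pos (mul_pos (mul_pos hc e1) (Real.sqrt_pos.2 e2)) e3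
  have hfpos : ∀ v : ℝ, v ^ 2 < sE → 0 < f v := fun v hv => inv_pos.2 (hhpos v hv)
  have hhcontAt : ∀ v : ℝ, v ^ 2 < sE → ContinuousAt h v := by
    intro v hv
    obtain ⟨e1, e2, e3⟩ := hfacts v hv
    apply ContinuousAt.div
    · exact ((continuous_const.mul (continuous_const.sub (continuous_pow 2))).mul
        (Real.continuous_sqrt.comp (continuous_const.sub (continuous_pow 2)))).continuousAt
    · exact (continuous_const.sub (continuous_const.mul (continuous_pow 2))).continuousAt
    · exact e3.ne'
  have hfcontAt : ∀ v : ℝ, v ^ 2 < sE → ContinuousAt f v := fun v hv =>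
    (hhcontAt v hv).inv₀ (hhpos v hv).ne'
  -- the open region
  have hUopen : IsOpen (Ioo (-a) a) := isOpen_Ioo
  have hfcontOn : ContinuousOn f (Ioo (-a) a) := fun v hv =>
    (hfcontAt v (hmem v hv)).continuousWithinAt
  have hInt : ∀ u ∈ Ioo (-a) a, ∀ w ∈ Ioo (-a) a,
      IntervalIntegrable f MeasureTheory.volume u w := by
    intro u hu w hw
    exact (hfcontOn.mono (Set.OrdConnected.uIcc_subset ordConnected_Ioo hu hw)).intervalIntegrable
  have h0mem : (0:ℝ) ∈ Ioo (-a) a := ⟨by linarith, ha⟩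
  set X : ℝ → ℝ := fun v => ∫ t in (0:ℝ)..v, f t with hX_def
  have hXderiv : ∀ v ∈ Ioo (-a) a, HasDerivAt X (f v) v := by
    intro v hv
    exact intervalIntegral.integral_hasDerivAt_right (hInt 0 h0mem v hv)
      (hfcontOn.stronglyMeasurableAtFilter hUopen v hv) (hfcontAt v (hmem v hv))
  -- oddness of X
  have hfeven : ∀ t : ℝ, f (-t) = f t := by
    intro t
    have ht : (-t) ^ 2 = t ^ 2 := neg_sq t
    simp only [hf_def, hh_def, ht]
  have hXodd : ∀ u : ℝ, X (-u) = - X u := by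
    intro u
    have h1' : X (-u) = ∫ t in (0:ℝ)..(-u), f (-t) := by
      apply intervalIntegral.integral_congr
      intro t _
      exact (hfeven t).symm
    rw [h1', intervalIntegral.integral_comp_neg f, neg_neg, neg_zero,
      intervalIntegral.integral_symm]
  -- the reparametrization σ : ℝ → (-a, a)
  have hπ : (0:ℝ) < π := Real.pi_pos
  set σ : ℝ → ℝ := fun v => (2 * a / π) * Real.arctan v with hσ_def
  have hcoef : 0 < 2 * a / π := by positivity
  have hcoefπ : (2 * a / π) * (π / 2) = a := by field_simp
  have hσmem : ∀ v : ℝ, σ v ∈ Ioo (-a) a := by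
    intro v
    constructor
    · have h1' : -(π/2) < Real.arctan v := Real.neg_pi_div_two_lt_arctan v
      have := mul_lt_mul_of_pos_left h1' hcoef
      calc -a = (2 * a / π) * (-(π/2)) := by rw [mul_neg, hcoefπ]
        _ < σ v := this
    · have h1' : Real.arctan v < π/2 := Real.arctan_lt_pi_div_two v
      have := mul_lt_mul_of_pos_left h1' hcoef
      calc σ v < (2 * a / π) * (π/2) := this
        _ = a := hcoefπ
  have hσd : ∀ v : ℝ, HasDerivAt σ ((2 * a / π) * (1 / (1 + v ^ 2))) v := fun v =>
    (Real.hasDerivAt_arctan v).const_mul _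
  have hσdpos : ∀ v : ℝ, 0 < (2 * a / π) * (1 / (1 + v ^ 2)) := fun v => by positivity
  have hσmono : StrictMono σ := by
    intro u w huw
    exact mul_lt_mul_of_pos_left (Real.arctan_strictMono huw) hcoef
  have hσodd : ∀ v : ℝ, σ (-v) = - σ v := by
    intro v; simp only [hσ_def, Real.arctan_neg, mul_neg]
  have hσtop : Tendsto σ atTop (nhds a) := by
    have h1' : Tendsto Real.arctan atTop (nhds (π/2)) :=
      Real.tendsto_arctan_atTop.mono_right nhdsWithin_le_nhds
    have := h1'.const_mul (2 * a / π)
    rwa [hcoefπ] at this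
  have hσbot : Tendsto σ atBot (nhds (-a)) := by
    have h1' : Tendsto Real.arctan atBot (nhds (-(π/2))) :=
      Real.tendsto_arctan_atBot.mono_right nhdsWithin_le_nhds
    have := h1'.const_mul (2 * a / π)
    rwa [mul_neg, hcoefπ] at this
  -- the diffeomorphism Z = X ∘ σ
  set Z : ℝ → ℝ := fun v => X (σ v) with hZ_def
  have hZd : ∀ v : ℝ,
      HasDerivAt Z (f (σ v) * ((2 * a / π) * (1 / (1 + v ^ 2)))) v := fun v =>
    (hXderiv (σ v) (hσmem v)).comp v (hσd v)
  have hZdpos : ∀ v : ℝ, 0 < f (σ v) * ((2 * a / π) * (1 / (1 + v ^ 2))) := fun v =>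
    mul_pos (hfpos _ (hmem _ (hσmem v))) (hσdpos v)
  have hZcont : Continuous Z := continuous_iff_continuousAt.2 fun v => (hZd v).continuousAt
  have hXlt : ∀ u ∈ Ioo (-a) a, ∀ w ∈ Ioo (-a) a, u < w → X u < X w := by
    intro u hu w hw huw
    have key : X u + ∫ t in u..w, f t = X w :=
      intervalIntegral.integral_add_adjacent_intervals (hInt 0 h0mem u hu) (hInt u hu w hw)
    have hpos : 0 < ∫ t in u..w, f t := by
      apply intervalIntegral.intervalIntegral_pos_of_pos_on (hInt u hu w hw) _ huw
      intro t ht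
      refine hfpos t (hmem t ⟨?_, ?_⟩)
      · exact lt_trans hu.1 ht.1
      · exact lt_trans ht.2 hw.2
    linarith
  have hZmono : StrictMono Z := fun u w huw =>
    hXlt (σ u) (hσmem u) (σ w) (hσmem w) (hσmono huw)
  have hZodd : ∀ v : ℝ, Z (-v) = - Z v := by
    intro v; rw [hZ_def]; simp only [hσodd, hXodd]
  -- comparison constant for the divergence estimate
  have hA3' : 0 < A - 3 * g * sE := by linarith
  set m : ℝ := (A - 3 * g * sE) / (2 * a * c * Real.sqrt sZ) with hm_def
  have hszpos : 0 < Real.sqrt sZ := Real.sqrt_pos.2 hsZ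
  have hm : 0 < m := div_pos hA3' (by positivity)
  have hbound : ∀ t ∈ Ioo (-a) a, m / (a - t) ≤ f t := by
    intro t ht
    have ht2 := hmem t ht
    obtain ⟨e1, e2, e3⟩ := hfacts t ht2
    have hat : 0 < a - t := by linarith [ht.2]
    have hsq : Real.sqrt (sZ - t ^ 2) ≤ Real.sqrt sZ :=
      Real.sqrt_le_sqrt (by nlinarith [sq_nonneg t])
    have hsqpos : 0 < Real.sqrt (sZ - t ^ 2) := Real.sqrt_pos.2 e2
    have hnum : c * (sE - t ^ 2) * Real.sqrt (sZ - t ^ 2)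
        ≤ c * ((a - t) * (2 * a)) * Real.sqrt sZ := by
      apply mul_le_mul _ hsq hsqpos.le (by positivity)
      apply mul_le_mul_of_nonneg_left _ hc.le
      nlinarith [sq_nonneg (a - t), ha2]
    have hht : h t ≤ c * ((a - t) * (2 * a)) * Real.sqrt sZ / (A - 3 * g * sE) := by
      rw [hh_def]
      exact div_le_div₀ (by positivity) hnum hA3' (by nlinarith)
    have hkey : m * h t ≤ a - t := by
      calc m * h t ≤ m * (c * ((a - t) * (2 * a)) * Real.sqrt sZ / (A - 3 * g * sE)) :=
            mul_le_mul_of_nonneg_left hht hm.le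
        _ = a - t := by rw [hm_def]; field_simp
    rw [hf_def, div_le_iff₀ hat, inv_mul_eq_div, le_div_iff₀ (hhpos t ht2)]
    exact hkey
  -- divergence of X at the right endpoint
  have hXtop : Tendsto X (nhdsWithin a (Ioo (-a) a)) atTop := by
    have hlow : ∀ v ∈ Ioo (0:ℝ) a,
        m * Real.log a - m * Real.log (a - v) ≤ X v := by
      intro v hv
      have hv' : v ∈ Ioo (-a) a := ⟨by linarith [hv.1], hv.2⟩
      have hint1 : IntervalIntegrable f MeasureTheory.volume 0 v := hInt 0 h0mem v hv'
      have hgcont : ContinuousOn (fun t => m / (a - t)) (uIcc 0 v) := by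
        apply ContinuousOn.div continuousOn_const
          (continuous_const.sub continuous_id).continuousOn
        intro t ht
        rw [uIcc_of_le hv.1.le] at ht
        have : t < a := lt_of_le_of_lt ht.2 hv.2
        exact (sub_pos.2 this).ne'
      have hint2 : IntervalIntegrable (fun t => m / (a - t)) MeasureTheory.volume 0 v :=
        hgcont.intervalIntegrable
      have hmono : (∫ t in (0:ℝ)..v, m / (a - t)) ≤ ∫ t in (0:ℝ)..v, f t := by
        apply intervalIntegral.integral_mono_on hv.1.le hint2 hint1
        intro t ht
        exact hbound t ⟨by linarith [ht.1], lt_of_le_of_lt ht.2 hv.2⟩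
      have hFTC : (∫ t in (0:ℝ)..v, m / (a - t))
          = (-(m * Real.log (a - v))) - (-(m * Real.log (a - 0))) := by
        apply intervalIntegral.integral_eq_sub_of_hasDerivAt _ hint2
        intro t ht
        rw [uIcc_of_le hv.1.le] at ht
        have hta : t < a := lt_of_le_of_lt ht.2 hv.2
        have h0 : a - t ≠ 0 := (sub_pos.2 hta).ne'
        have d1 : HasDerivAt (fun t : ℝ => a - t) (-1) t := (hasDerivAt_id t).const_sub a
        have d2 : HasDerivAt (fun t : ℝ => Real.log (a - t)) ((a - t)⁻¹ * (-1)) t :=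
          (Real.hasDerivAt_log h0).comp t d1
        have d3 := (d2.const_mul m).neg
        convert d3 using 1
        · rfl
        field_simp
      rw [hFTC, sub_zero] at hmono
      calc m * Real.log a - m * Real.log (a - v)
          = (-(m * Real.log (a - v))) - (-(m * Real.log a)) := by ring
        _ ≤ X v := hmono
    have t0 : Tendsto (fun v : ℝ => a - v) (nhdsWithin a (Ioo (-a) a))
        (nhdsWithin 0 (Ioi 0)) := by
      rw [tendsto_nhdsWithin_iff]
      constructor
      · have hcont : Continuous (fun v : ℝ => a - v) := continuous_const.sub continuous_id
        have : Tendsto (fun v : ℝ => a - v) (nhdsWithin a (Ioo (-a) a)) (nhds (a - a)) :=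
          (hcont.tendsto a).mono_left nhdsWithin_le_nhds
        simpa using this
      · filter_upwards [self_mem_nhdsWithin] with v hv
        exact mem_Ioi.2 (sub_pos.2 hv.2)
    have t1 : Tendsto (fun v : ℝ => Real.log (a - v)) (nhdsWithin a (Ioo (-a) a)) atBot :=
      Real.tendsto_log_nhdsGT_zero.comp t0
    have t2 : Tendsto (fun y : ℝ => m * Real.log a + m * (-y)) atBot atTop :=
      tendsto_atTop_add_const_left _ _ (Tendsto.const_mul_atTop hm tendsto_neg_atBot_atTop)
    have t3 : Tendsto (fun v : ℝ => m * Real.log a - m * Real.log (a - v))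
        (nhdsWithin a (Ioo (-a) a)) atTop := by
      have := t2.comp t1
      refine this.congr fun v => ?_
      simp only [Function.comp]
      ring
    apply tendsto_atTop_mono' _ _ t3
    filter_upwards [self_mem_nhdsWithin,
      eventually_nhdsWithin_of_eventually_nhds (eventually_gt_nhds ha)] with v hv1 hv2
    exact hlow v ⟨hv2, hv1.2⟩
  -- Z is a strictly monotone surjection of ℝ
  have hZtop : Tendsto Z atTop atTop := by
    apply hXtop.comp
    rw [tendsto_nhdsWithin_iff]
    exact ⟨hσtop, Eventually.of_forall hσmem⟩
  have hZbot : Tendsto Z atBot atBot := by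
    have h1' : Tendsto (fun v => Z (-v)) atBot atTop := hZtop.comp tendsto_neg_atBot_atTop
    have h2' : Tendsto (fun v => -Z (-v)) atBot atBot := tendsto_neg_atTop_atBot.comp h1'
    refine h2'.congr fun v => ?_
    rw [hZodd, neg_neg]
  have hZsurj : Function.Surjective Z := hZcont.surjective hZtop hZbot
  -- the inverse function W
  set E := StrictMono.orderIsoOfSurjective Z hZmono hZsurj with hE_def
  set W : ℝ → ℝ := fun x => E.symm x with hW_def
  have hZW : ∀ x, Z (W x) = x := by
    intro x
    have h1' := E.apply_symm_apply x
    rw [hE_def] at h1'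
    rw [StrictMono.coe_orderIsoOfSurjective] at h1'
    exact h1'
  have hWZ : ∀ v, W (Z v) = v := fun v => hZmono.injective (by rw [hZW])
  have hWcont : Continuous W := OrderIso.continuous E.symm
  have hWmono : Monotone W := E.symm.monotone
  have hWodd : ∀ x, W (-x) = - W x := by
    intro x
    apply hZmono.injective
    rw [hZW, hZodd, hZW]
  have hWtop : Tendsto W atTop atTop :=
    tendsto_atTop_atTop_of_monotone hWmono fun b => ⟨Z b, (hWZ b).ge⟩
  have hWbot : Tendsto W atBot atBot :=
    tendsto_atBot_atBot_of_monotone hWmono fun b => ⟨Z b, (hWZ b).le⟩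
  have hWd : ∀ x : ℝ,
      HasDerivAt W (f (σ (W x)) * ((2 * a / π) * (1 / (1 + (W x) ^ 2))))⁻¹ x := fun x =>
    HasDerivAt.of_local_left_inverse hWcont.continuousAt (hZd (W x)) (hZdpos (W x)).ne'
      (Eventually.of_forall hZW)
  -- the exciton envelope
  set φX : ℝ → ℝ := fun x => σ (W x) with hφX_def
  have hφXmem : ∀ x, φX x ∈ Ioo (-a) a := fun x => hσmem (W x)
  have hφX2 : ∀ x, (φX x) ^ 2 < sE := fun x => hmem _ (hφXmem x)
  have hφXd : ∀ x, HasDerivAt φX (h (φX x)) x := by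
    intro x
    have hd := (hσd (W x)).comp x (hWd x)
    convert hd using 1
    · rfl
    · rfl
    · rfl
    have hh0 : h (σ (W x)) ≠ 0 := (hhpos _ (hmem _ (hσmem (W x)))).ne'
    have hs0 : ((2 * a / π) * (1 / (1 + (W x) ^ 2))) ≠ 0 := (hσdpos (W x)).ne'
    rw [hf_def]
    field_simp
    simp only [hφX_def]
  -- the photon envelope
  set φC : ℝ → ℝ := fun x => (A * φX x - g * (φX x) ^ 3) / γ with hφC_def
  have eq1 : ∀ x, (g * φX x ^ 2 - A) * φX x + γ * φC x = 0 := by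
    intro x
    rw [hφC_def]
    field_simp
    ring
  have hφCd : ∀ x, HasDerivAt φC
      ((c / γ) * ((sE - (φX x) ^ 2) * Real.sqrt (sZ - (φX x) ^ 2))) x := by
    intro x
    have hv2 := hφX2 x
    obtain ⟨e1, e2, e3⟩ := hfacts _ hv2
    have hF : HasDerivAt (fun v : ℝ => (A * v - g * v ^ 3) / γ)
        ((A - 3 * g * (φX x) ^ 2) / γ) (φX x) := by
      have d1 := (((hasDerivAt_id (φX x)).const_mul A).sub
        ((hasDerivAt_pow 3 (φX x)).const_mul g)).div_const γ
      convert d1 using 1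
      · rfl
      · rfl
      norm_num
      ring
    have hd := hF.comp x (hφXd x)
    convert hd using 1
    · rfl
    · rfl
    · rfl
    rw [hh_def]
    field_simp [e3.ne']
    exact (div_self (by intro h0; linarith)).symm
  have hderivφC : deriv φC
      = fun x => (c / γ) * ((sE - (φX x) ^ 2) * Real.sqrt (sZ - (φX x) ^ 2)) :=
    funext fun x => (hφCd x).deriv
  have hφC2d : ∀ x, HasDerivAt (deriv φC)
      (-(2 * B * g / γ) * (φX x * (sE - (φX x) ^ 2))) x := by
    intro x
    rw [hderivφC]
    have hv2 := hφX2 x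
    obtain ⟨e1, e2, e3⟩ := hfacts _ hv2
    have hr : 0 < Real.sqrt (sZ - (φX x) ^ 2) := Real.sqrt_pos.2 e2
    have hrsq : Real.sqrt (sZ - (φX x) ^ 2) ^ 2 = sZ - (φX x) ^ 2 := Real.sq_sqrt e2.le
    have dinner : HasDerivAt (fun w : ℝ => sZ - w ^ 2) (-(2 * (φX x))) (φX x) := by
      have d0 := (hasDerivAt_pow 2 (φX x)).const_sub sZ
      convert d0 using 1
      · rfl
      · rfl
      norm_num
    have dpoly : HasDerivAt (fun w : ℝ => sE - w ^ 2) (-(2 * (φX x))) (φX x) := by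
      have d0 := (hasDerivAt_pow 2 (φX x)).const_sub sE
      convert d0 using 1
      · rfl
      · rfl
      norm_num
    have dsqrt : HasDerivAt (fun w : ℝ => Real.sqrt (sZ - w ^ 2))
        (1 / (2 * Real.sqrt (sZ - (φX x) ^ 2)) * (-(2 * (φX x)))) (φX x) :=
      (Real.hasDerivAt_sqrt e2.ne').comp (φX x) dinner
    have dG : HasDerivAt (fun w : ℝ => (c / γ) * ((sE - w ^ 2) * Real.sqrt (sZ - w ^ 2)))
        ((c / γ) * ((-(2 * (φX x))) * Real.sqrt (sZ - (φX x) ^ 2)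
          + (sE - (φX x) ^ 2) * (1 / (2 * Real.sqrt (sZ - (φX x) ^ 2)) * (-(2 * (φX x))))))
        (φX x) := (dpoly.mul dsqrt).const_mul (c / γ)
    have hd := dG.comp x (hφXd x)
    convert hd using 1
    · rfl
    · rfl
    · rfl
    rw [hh_def]
    simp only [hφX_def]
    set v := σ (W x) with hv_def
    have hr' : Real.sqrt (sZ - v ^ 2) ≠ 0 := by rw [hφX_def] at hr; exact hr.ne'
    have he3' : A - 3 * g * v ^ 2 ≠ 0 := by rw [hφX_def] at e3; exact e3.ne'
    have hrsq' : Real.sqrt (sZ - v ^ 2) ^ 2 = sZ - v ^ 2 := by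
      rw [hφX_def] at hrsq; exact hrsq
    clear_value v c sE sZ
    field_simp
    rw [eq_div_iff (by intro h0; apply he3'; linarith)]
    linear_combination
      (v * (sE - v ^ 2) * (2 * Real.sqrt (sZ - v ^ 2) ^ 2 + sE - v ^ 2)) * hc2
      + (4 * B * g ^ 2 * v * (sE - v ^ 2)) * hrsq'
      + (2 * B * g * v * (sE - v ^ 2)) * hAid
  -- the second envelope equation
  clear_value sE sZ
  have eq2 : ∀ x, -(1/2) * deriv (deriv φC) x - B * φC x + γ * φX x = 0 := by
    intro x
    rw [(hφC2d x).deriv, hφC_def]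
    field_simp [hγ]
    linear_combination (φX x) * hBid
  -- smoothness
  have hφXdiff : Differentiable ℝ φX := fun x => (hφXd x).differentiableAt
  have hφXcont : Continuous φX := hφXdiff.continuous
  have hcont_h : Continuous fun x => h (φX x) := by
    simp only [hh_def]
    apply Continuous.div
    · exact (continuous_const.mul (continuous_const.sub (hφXcont.pow 2))).mul
        (Real.continuous_sqrt.comp (continuous_const.sub (hφXcont.pow 2)))
    · exact continuous_const.sub (continuous_const.mul (hφXcont.pow 2))
    · intro x
      exact (hfacts _ (hφX2 x)).2.2.ne'
  have hcd1 : ContDiff ℝ 1 φX := by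
    rw [contDiff_one_iff_deriv]
    refine ⟨hφXdiff, ?_⟩
    have hde : deriv φX = fun x => h (φX x) := funext fun x => (hφXd x).deriv
    rw [hde]
    exact hcont_h
  have hφCdiff : Differentiable ℝ φC := fun x => (hφCd x).differentiableAt
  have hderiv2 : deriv (deriv φC)
      = fun x => -(2 * B * g / γ) * (φX x * (sE - (φX x) ^ 2)) :=
    funext fun x => (hφC2d x).deriv
  have hcd2 : ContDiff ℝ 2 φC := by
    rw [show (2 : WithTop ℕ∞) = 1 + 1 from by norm_num, contDiff_succ_iff_deriv]
    refine ⟨hφCdiff, by norm_num, ?_⟩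
    rw [contDiff_one_iff_deriv]
    refine ⟨fun x => (hφC2d x).differentiableAt, ?_⟩
    rw [hderiv2]
    exact continuous_const.mul (hφXcont.mul (continuous_const.sub (hφXcont.pow 2)))
  -- oddness
  have hφXodd : ∀ x, φX (-x) = - φX x := by
    intro x
    simp only [hφX_def]
    rw [hWodd, hσodd]
  have hφCodd : ∀ x, φC (-x) = - φC x := by
    intro x
    simp only [hφC_def]
    rw [hφXodd x]
    ring
  -- monotonicity
  have hφXmono : Monotone φX := hσmono.monotone.comp hWmono
  have hmono_poly : ∀ u w : ℝ, u ∈ Ioo (-a) a → w ∈ Ioo (-a) a → u ≤ w →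
      A * u - g * u ^ 3 ≤ A * w - g * w ^ 3 := by
    intro u w hu hw huw
    have hu2 := hmem u hu
    have hw2 := hmem w hw
    have hsum : u ^ 2 + u * w + w ^ 2 < 3 * sE := by nlinarith [sq_nonneg (u - w)]
    have hfac : 0 ≤ A - g * (u ^ 2 + u * w + w ^ 2) := by nlinarith
    nlinarith [mul_nonneg (sub_nonneg.2 huw) hfac]
  have hφCmono : Monotone φC ∨ Antitone φC := by
    rcases hγ.lt_or_gt with hneg | hpos
    · right
      intro x y hxy
      simp only [hφC_def, div_eq_mul_inv]
      exact mul_le_mul_of_nonpos_right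
        (hmono_poly _ _ (hφXmem x) (hφXmem y) (hφXmono hxy)) (inv_nonpos.2 hneg.le)
    · left
      intro x y hxy
      simp only [hφC_def, div_eq_mul_inv]
      exact mul_le_mul_of_nonneg_right
        (hmono_poly _ _ (hφXmem x) (hφXmem y) (hφXmono hxy)) (inv_nonneg.2 hpos.le)
  -- bounds
  have hφXbdd : ∀ x, |φX x| ≤ a := fun x =>
    (abs_lt.2 ⟨(hφXmem x).1, (hφXmem x).2⟩).le
  have hφCbdd : ∀ x, |φC x| ≤ (A * a + g * a ^ 3) / |γ| := by
    intro x
    have hnum : |A * φX x - g * φX x ^ 3| ≤ A * a + g * a ^ 3 := by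
      have e1 : |A * φX x| ≤ A * a := by
        rw [abs_mul, abs_of_pos hA]
        exact mul_le_mul_of_nonneg_left (hφXbdd x) hA.le
      have e2 : |g * φX x ^ 3| ≤ g * a ^ 3 := by
        rw [abs_mul, abs_of_pos hg, abs_pow]
        exact mul_le_mul_of_nonneg_left (pow_le_pow_left₀ (abs_nonneg _) (hφXbdd x) 3) hg.le
      calc |A * φX x - g * φX x ^ 3| = |A * φX x + -(g * φX x ^ 3)| := by rw [sub_eq_add_neg]
        _ ≤ |A * φX x| + |-(g * φX x ^ 3)| := abs_add_le _ _
        _ = |A * φX x| + |g * φX x ^ 3| := by rw [abs_neg]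
        _ ≤ A * a + g * a ^ 3 := add_le_add e1 e2
    simp only [hφC_def]
    rw [abs_div]
    exact (div_le_div_iff_of_pos_right (abs_pos.2 hγ)).2 hnum
  -- far-field limits
  have hval : a ^ 2 = (A - γ ^ 2 / B) / g := by
    rw [ha2, hsE_def]
    field_simp
  have hXtt : Tendsto φX atTop (nhds a) := hσtop.comp hWtop
  have hXtb : Tendsto φX atBot (nhds (-a)) := hσbot.comp hWbot
  have T1 : Tendsto (fun x => φX x ^ 2) atTop (nhds ((A - γ ^ 2 / B) / g)) := by
    have := hXtt.pow 2
    rwa [hval] at this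
  have T2 : Tendsto (fun x => φX x ^ 2) atBot (nhds ((A - γ ^ 2 / B) / g)) := by
    have := hXtb.pow 2
    rwa [show (-a) ^ 2 = a ^ 2 by ring, hval] at this
  exact ⟨φX, φC, hcd1, hcd2, eq1, eq2, hφXodd, hφCodd, Or.inl hφXmono, hφCmono,
    ⟨a, hφXbdd⟩, ⟨(A * a + g * a ^ 3) / |γ|, hφCbdd⟩, T1, T2⟩

open Filter

/-- Band 1.2: existence of dark solitons for `g > 0` and `ω > max(ωX, ωC)`,
`γ² < ϖX·ϖC < (3/2)γ²`: antisymmetric, monotonic, bounded envelopes with far-field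
amplitude `(ϖX − γ²/ϖC)/g`. -/
theorem dark_soliton_band_1_2
    (ω ωX ωC γ g : ℝ) (hγ : γ ≠ 0) (hg : 0 < g)
    (hω : ω > max ωX ωC)
    (hband₁ : γ ^ 2 < (ω - ωX) * (ω - ωC)) (hband₂ : (ω - ωX) * (ω - ωC) < (3/2) * γ ^ 2) :
    ∃ φX φC : ℝ → ℝ,
      ContDiff ℝ 1 φX ∧ ContDiff ℝ 2 φC ∧
      (∀ x : ℝ, (g * φX x ^ 2 - (ω - ωX)) * φX x + γ * φC x = 0) ∧
      (∀ x : ℝ, -(1/2) * deriv (deriv φC) x - (ω - ωC) * φC x + γ * φX x = 0) ∧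
      (∀ x : ℝ, φX (-x) = -φX x) ∧ (∀ x : ℝ, φC (-x) = -φC x) ∧
      (Monotone φX ∨ Antitone φX) ∧ (Monotone φC ∨ Antitone φC) ∧
      (∃ M : ℝ, ∀ x : ℝ, |φX x| ≤ M) ∧ (∃ M : ℝ, ∀ x : ℝ, |φC x| ≤ M) ∧
      Tendsto (fun x => φX x ^ 2) atTop (nhds (((ω - ωX) - γ ^ 2 / (ω - ωC)) / g)) ∧
      Tendsto (fun x => φX x ^ 2) atBot (nhds (((ω - ωX) - γ ^ 2 / (ω - ωC)) / g)) := by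
  have hA : 0 < ω - ωX := sub_pos.2 (lt_of_le_of_lt (le_max_left _ _) hω)
  have hB : 0 < ω - ωC := sub_pos.2 (lt_of_le_of_lt (le_max_right _ _) hω)
  exact aux_dark_soliton (ω - ωX) (ω - ωC) γ g hγ hg hA hB hband₁ hband₂
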